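/- Let ω ∈ ℝ. Define s_k = ω^k · sin(kπ/2)/k! and c_k = ω^k · cos(kπ/2)/k! for k ∈ ℕ (these are the Taylor coefficients at 0 of sin(ωx) and cos(ωx)). Then the sequences z¹(n) = Σ_{k=0}^{n} s_k · n!/(n−k)! and z²(n) = Σ_{k=0}^{n} c_k · n!/(n−k)! both satisfy the recurrence z(n+2) − 2·z(n+1) + (ω²+1)·z(n) = 0 for all n ∈ ℕ. -/

import Mathlib

lemma I_pow_re_im (k : ℕ) :
    (Complex.I ^ k).re = Real.cos (k * Real.pi / 2) ∧
    (Complex.I ^ k).im = Real.sin (k * Real.pi / 2) := by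
  have hI : Complex.I = Complex.exp ((Real.pi / 2 : ℝ) * Complex.I) := by
    rw [Complex.exp_mul_I]
    simp [Real.cos_pi_div_two, Real.sin_pi_div_two]
  have : Complex.I ^ k = Complex.exp ((k * Real.pi / 2 : ℝ) * Complex.I) := by
    conv_lhs => rw [hI]
    rw [← Complex.exp_nat_mul]
    congr 1
    push_cast
    ring
  rw [this]
  exact ⟨Complex.exp_ofReal_mul_I_re _, Complex.exp_ofReal_mul_I_im _⟩

lemma aux_im (x y : ℝ) (m : ℕ) : (((x : ℂ) + (y : ℂ) * Complex.I) * (m : ℂ)).im = y * m := by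
  simp

lemma aux_re (x y : ℝ) (m : ℕ) : (((x : ℂ) + (y : ℂ) * Complex.I) * (m : ℂ)).re = x * m := by
  simp

/-- The discrete classical harmonic oscillator: the interpolating transforms of the
Taylor coefficients of sin(ωx) and cos(ωx) solve the recurrence
z(n+2) − 2z(n+1) + (ω²+1)z(n) = 0. -/
theorem discrete_harmonic_oscillator (ω : ℝ) (s c : ℕ → ℝ)
    (hs : ∀ k : ℕ, s k = ω ^ k * Real.sin (k * Real.pi / 2) / (Nat.factorial k : ℝ))
    (hc : ∀ k : ℕ, c k = ω ^ k * Real.cos (k * Real.pi / 2) / (Nat.factorial k : ℝ))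
    (z₁ z₂ : ℕ → ℝ)
    (hz₁ : ∀ n : ℕ, z₁ n = ∑ k ∈ Finset.range (n + 1), s k * (Nat.descFactorial n k : ℝ))
    (hz₂ : ∀ n : ℕ, z₂ n = ∑ k ∈ Finset.range (n + 1), c k * (Nat.descFactorial n k : ℝ)) :
    ∀ n : ℕ,
      z₁ (n + 2) - 2 * z₁ (n + 1) + (ω ^ 2 + 1) * z₁ n = 0 ∧
      z₂ (n + 2) - 2 * z₂ (n + 1) + (ω ^ 2 + 1) * z₂ n = 0 := by
  set w : ℂ := 1 + (ω : ℂ) * Complex.I with hwdef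
  have hpow : ∀ n : ℕ, w ^ n =
      ∑ k ∈ Finset.range (n + 1), ((ω : ℂ) * Complex.I) ^ k * (Nat.choose n k : ℂ) := by
    intro n
    rw [hwdef, add_comm (1 : ℂ), add_pow]
    exact Finset.sum_congr rfl fun k _ => by rw [one_pow, mul_one]
  have hterm : ∀ k : ℕ, ((ω : ℂ) * Complex.I) ^ k =
      ((ω ^ k * Real.cos (k * Real.pi / 2) : ℝ) : ℂ) +
      ((ω ^ k * Real.sin (k * Real.pi / 2) : ℝ) : ℂ) * Complex.I := by
    intro k
    rw [mul_pow]
    conv_lhs => rw [← Complex.re_add_im (Complex.I ^ k)]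
    rw [(I_pow_re_im k).1, (I_pow_re_im k).2]
    push_cast
    ring
  have hdesc : ∀ n k : ℕ, k ≤ n → (Nat.descFactorial n k : ℝ) =
      (Nat.factorial k : ℝ) * (Nat.choose n k : ℝ) := by
    intro n k _
    rw [Nat.descFactorial_eq_factorial_mul_choose]
    push_cast
    ring
  have hz₁' : ∀ n : ℕ, z₁ n = (w ^ n).im := by
    intro n
    rw [hz₁, hpow, Complex.im_sum]
    refine Finset.sum_congr rfl fun k hk => ?_
    have hk' : k ≤ n := Nat.lt_succ_iff.mp (Finset.mem_range.mp hk)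
    rw [hterm, hs, hdesc n k hk']
    have hf : (Nat.factorial k : ℝ) ≠ 0 := Nat.cast_ne_zero.mpr (Nat.factorial_ne_zero k)
    rw [aux_im]
    field_simp
  have hz₂' : ∀ n : ℕ, z₂ n = (w ^ n).re := by
    intro n
    rw [hz₂, hpow, Complex.re_sum]
    refine Finset.sum_congr rfl fun k hk => ?_
    have hk' : k ≤ n := Nat.lt_succ_iff.mp (Finset.mem_range.mp hk)
    rw [hterm, hc, hdesc n k hk']
    have hf : (Nat.factorial k : ℝ) ≠ 0 := Nat.cast_ne_zero.mpr (Nat.factorial_ne_zero k)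
    rw [aux_re]
    field_simp
  intro n
  have hw2 : w ^ 2 - 2 * w + ((ω : ℂ) ^ 2 + 1) = 0 := by
    rw [hwdef]
    linear_combination (ω : ℂ) ^ 2 * Complex.I_sq
  have hw : w ^ (n + 2) - ((2 : ℝ) : ℂ) * w ^ (n + 1) + (((ω ^ 2 + 1 : ℝ)) : ℂ) * w ^ n = 0 := by
    push_cast
    calc w ^ (n + 2) - 2 * w ^ (n + 1) + ((ω : ℂ) ^ 2 + 1) * w ^ n
        = w ^ n * (w ^ 2 - 2 * w + ((ω : ℂ) ^ 2 + 1)) := by ring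
      _ = 0 := by rw [hw2]; ring
  have h1 := congrArg Complex.im hw
  have h2 := congrArg Complex.re hw
  simp only [Complex.sub_im, Complex.add_im, Complex.im_ofReal_mul, Complex.zero_im,
    Complex.sub_re, Complex.add_re, Complex.re_ofReal_mul, Complex.zero_re] at h1 h2
  constructor
  · rw [hz₁' (n + 2), hz₁' (n + 1), hz₁' n]; linarith
  · rw [hz₂' (n + 2), hz₂' (n + 1), hz₂' n]; linarith
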